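/- In the stochastic volatility model: (a) for every x ∈ ℝ, ∫₀^∞ y p^{α,β}(x, y) dy = (α/β) ∫₀^∞ p^{α+1,β}(x, y) dy; and (b) the function a(x) = ∫₀^∞ y p^{α,β}(x, y) dy is differentiable with a′(x) = −x ∫₀^∞ p^{α,β}(x, y) dy for every x ∈ ℝ. Consequently, ½ (log a)′(x) = −(x/2) · ∫₀^∞ p^{α,β}(x, y) dy / ∫₀^∞ y p^{α,β}(x, y) dy. -/

import Mathlib

open MeasureTheory Real Set

/-- The density `p^{α,β}(x, y)`: product of the `Gamma(α, β)` density in `y` with the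
centered Gaussian density of variance `y` in `x`. -/
noncomputable def pab (α β : ℝ) (x y : ℝ) : ℝ :=
  (2 * Real.pi * y) ^ (-(1 : ℝ) / 2) * Real.exp (-(x ^ 2) / (2 * y)) *
    (β ^ α / Real.Gamma α) * y ^ (α - 1) * Real.exp (-β * y)


noncomputable def cfn (α β : ℝ) (y : ℝ) : ℝ :=
  (2 * Real.pi * y) ^ (-(1 : ℝ) / 2) * (β ^ α / Real.Gamma α) * y ^ (α - 1) * Real.exp (-β * y)

lemma pab_eq (α β x y : ℝ) : pab α β x y = cfn α β y * Real.exp (-(x ^ 2) / (2 * y)) := by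
  unfold pab cfn; ring

lemma meas_pab (α β x : ℝ) : Measurable (fun y => pab α β x y) := by
  unfold pab; fun_prop

lemma meas_cfn (α β : ℝ) : Measurable (cfn α β) := by
  unfold cfn; fun_prop

lemma cfn_pos (α β : ℝ) (hα : 0 < α) (hβ : 0 < β) {y : ℝ} (hy : 0 < y) : 0 < cfn α β y := by
  have hΓ : 0 < Real.Gamma α := Real.Gamma_pos_of_pos hα
  have hπ : 0 < Real.pi := Real.pi_pos
  unfold cfn
  positivity

lemma pab_pos (α β x : ℝ) (hα : 0 < α) (hβ : 0 < β) {y : ℝ} (hy : 0 < y) : 0 < pab α β x y := by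
  rw [pab_eq]; exact mul_pos (cfn_pos α β hα hβ hy) (Real.exp_pos _)

lemma pab_le_cfn (α β x : ℝ) (hα : 0 < α) (hβ : 0 < β) {y : ℝ} (hy : 0 < y) :
    pab α β x y ≤ cfn α β y := by
  rw [pab_eq]
  have h1 : Real.exp (-(x ^ 2) / (2 * y)) ≤ 1 := by
    rw [Real.exp_le_one_iff]
    apply div_nonpos_of_nonpos_of_nonneg <;> nlinarith [sq_nonneg x]
  nlinarith [cfn_pos α β hα hβ hy, Real.exp_pos (-(x ^ 2) / (2 * y))]

lemma integrableOn_aux {s β : ℝ} (hs : -1 < s) (hβ : 0 < β) :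
    IntegrableOn (fun y : ℝ => y ^ s * Real.exp (-β * y)) (Ioi 0) := by
  have := integrableOn_rpow_mul_exp_neg_mul_rpow hs one_pos hβ
  simpa using this

lemma cfn_decomp (α β : ℝ) {y : ℝ} (hy : 0 < y) :
    cfn α β y = ((2 * Real.pi) ^ (-(1 : ℝ) / 2) * (β ^ α / Real.Gamma α)) *
      (y ^ (α - 3/2) * Real.exp (-β * y)) := by
  have h1 : y ^ (α - 3/2 : ℝ) = y ^ (-(1:ℝ)/2) * y ^ (α - 1) := by
    rw [← Real.rpow_add hy]; congr 1; ring
  unfold cfn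
  rw [Real.mul_rpow (by positivity) hy.le, h1]; ring

lemma integrableOn_cfn (α β : ℝ) (hα : 1 < α) (hβ : 0 < β) :
    IntegrableOn (cfn α β) (Ioi 0) := by
  have h : IntegrableOn (fun y : ℝ =>
      ((2 * Real.pi) ^ (-(1 : ℝ) / 2) * (β ^ α / Real.Gamma α)) *
        (y ^ (α - 3/2) * Real.exp (-β * y))) (Ioi 0) :=
    (integrableOn_aux (by linarith) hβ).const_mul _
  exact h.congr_fun (fun y hy => (cfn_decomp α β hy).symm) measurableSet_Ioi

lemma integrableOn_mul_cfn (α β : ℝ) (hα : 1 < α) (hβ : 0 < β) :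
    IntegrableOn (fun y => y * cfn α β y) (Ioi 0) := by
  have h : IntegrableOn (fun y : ℝ =>
      ((2 * Real.pi) ^ (-(1 : ℝ) / 2) * (β ^ α / Real.Gamma α)) *
        (y ^ (α - 1/2) * Real.exp (-β * y))) (Ioi 0) :=
    (integrableOn_aux (by linarith) hβ).const_mul _
  refine h.congr_fun (fun y hy => ?_) measurableSet_Ioi
  have hy : (0:ℝ) < y := hy
  rw [cfn_decomp α β hy]
  have h1 : y ^ (α - 1/2 : ℝ) = y * y ^ (α - 3/2 : ℝ) := by
    rw [show (α - 1/2 : ℝ) = 1 + (α - 3/2) by ring, Real.rpow_add hy, Real.rpow_one]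
  beta_reduce; rw [h1]; ring

lemma integrableOn_mul_pab (α β x : ℝ) (hα : 1 < α) (hβ : 0 < β) :
    IntegrableOn (fun y => y * pab α β x y) (Ioi 0) := by
  refine (integrableOn_mul_cfn α β hα hβ).mono'
    ((measurable_id.mul (meas_pab α β x)).aestronglyMeasurable) ?_
  refine (ae_restrict_iff' measurableSet_Ioi).2 (Filter.Eventually.of_forall fun y hy => ?_)
  have hy : (0:ℝ) < y := hy
  have h1 : 0 ≤ y * pab α β x y := mul_nonneg hy.le (pab_pos α β x (by linarith) hβ hy).le
  rw [Real.norm_eq_abs, abs_of_nonneg h1]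
  exact mul_le_mul_of_nonneg_left (pab_le_cfn α β x (by linarith) hβ hy) hy.le

set_option maxHeartbeats 1000000 in
lemma hasDerivAt_main (α β : ℝ) (hα : 1 < α) (hβ : 0 < β) (x₀ : ℝ) :
    HasDerivAt (fun x => ∫ y in Ioi (0:ℝ), y * pab α β x y)
      (-x₀ * ∫ y in Ioi (0:ℝ), pab α β x₀ y) x₀ := by
  have hα0 : (0:ℝ) < α := by linarith
  have hmeas : ∀ᶠ x in nhds x₀, AEStronglyMeasurable (fun y => y * pab α β x y)
      (volume.restrict (Ioi (0:ℝ))) :=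
    Filter.Eventually.of_forall fun x =>
      (measurable_id.mul (meas_pab α β x)).aestronglyMeasurable
  have hint : Integrable (fun y => y * pab α β x₀ y) (volume.restrict (Ioi (0:ℝ))) :=
    integrableOn_mul_pab α β x₀ hα hβ
  have hmeas' : AEStronglyMeasurable (fun y => -x₀ * pab α β x₀ y)
      (volume.restrict (Ioi (0:ℝ))) :=
    (measurable_const.mul (meas_pab α β x₀)).aestronglyMeasurable
  have hbi : Integrable (fun y => (|x₀| + 1) * cfn α β y) (volume.restrict (Ioi (0:ℝ))) :=
    (integrableOn_cfn α β hα hβ).const_mul _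
  have hbound : ∀ᵐ y ∂(volume.restrict (Ioi (0:ℝ))), ∀ x ∈ Metric.ball x₀ 1,
      ‖-x * pab α β x y‖ ≤ (|x₀| + 1) * cfn α β y := by
    refine (ae_restrict_iff' measurableSet_Ioi).2 (Filter.Eventually.of_forall fun y hy => ?_)
    intro x hx
    have hy : (0:ℝ) < y := hy
    have hp : 0 < pab α β x y := pab_pos α β x hα0 hβ hy
    have hxb : |x| ≤ |x₀| + 1 := by
      have := abs_sub_abs_le_abs_sub x x₀
      have hd : |x - x₀| < 1 := by simpa [Real.dist_eq] using Metric.mem_ball.1 hx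
      linarith
    rw [Real.norm_eq_abs, abs_mul, abs_neg, abs_of_nonneg hp.le]
    exact mul_le_mul hxb (pab_le_cfn α β x hα0 hβ hy) hp.le (by positivity)
  have hdiff : ∀ᵐ y ∂(volume.restrict (Ioi (0:ℝ))), ∀ x ∈ Metric.ball x₀ 1,
      HasDerivAt (fun x => y * pab α β x y) (-x * pab α β x y) x := by
    refine (ae_restrict_iff' measurableSet_Ioi).2 (Filter.Eventually.of_forall fun y hy => ?_)
    intro x hx
    have hy : (0:ℝ) < y := hy
    have funeq : (fun x => y * pab α β x y)
        = fun x => (y * cfn α β y) * Real.exp (-(x ^ 2) / (2 * y)) :=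
      funext fun x' => by rw [pab_eq]; ring
    rw [funeq]
    have h0 : HasDerivAt (fun x : ℝ => -(x ^ 2) / (2 * y))
        (-((2:ℕ) * x ^ 1) / (2 * y)) x := ((hasDerivAt_pow 2 x).neg).div_const (2 * y)
    have h2 := (h0.exp).const_mul (y * cfn α β y)
    refine h2.congr_deriv ?_
    rw [pab_eq]
    push_cast
    field_simp
  have key := (hasDerivAt_integral_of_dominated_loc_of_deriv_le (Metric.ball_mem_nhds x₀ one_pos) hmeas hint hmeas'
    hbound hbi hdiff).2
  rwa [integral_const_mul] at key

/-- In the stochastic volatility model: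
(a) `∫₀^∞ y p^{α,β}(x, y) dy = (α/β) ∫₀^∞ p^{α+1,β}(x, y) dy` for every `x`;
(b) `a(x) = ∫₀^∞ y p^{α,β}(x, y) dy` is differentiable with
`a′(x) = −x ∫₀^∞ p^{α,β}(x, y) dy`; and consequently
`½ (log a)′(x) = −(x/2) ∫₀^∞ p^{α,β}(x, y) dy / ∫₀^∞ y p^{α,β}(x, y) dy`. -/
theorem stochastic_volatility_marginal_strategy
    (α β : ℝ) (hα : 1 < α) (hβ : 0 < β) :
    (∀ x : ℝ, (∫ y in Set.Ioi (0 : ℝ), y * pab α β x y)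
        = (α / β) * ∫ y in Set.Ioi (0 : ℝ), pab (α + 1) β x y) ∧
    (∀ x : ℝ, HasDerivAt (fun x' => ∫ y in Set.Ioi (0 : ℝ), y * pab α β x' y)
        (-x * ∫ y in Set.Ioi (0 : ℝ), pab α β x y) x) ∧
    (∀ x : ℝ, (1 / 2 : ℝ) * deriv (fun x' => Real.log (∫ y in Set.Ioi (0 : ℝ), y * pab α β x' y)) x
        = -(x / 2) * (∫ y in Set.Ioi (0 : ℝ), pab α β x y)
            / (∫ y in Set.Ioi (0 : ℝ), y * pab α β x y)) := by
  have hα0 : (0:ℝ) < α := by linarith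
  have hΓ : 0 < Real.Gamma α := Real.Gamma_pos_of_pos hα0
  refine ⟨?_, fun x => hasDerivAt_main α β hα hβ x, ?_⟩
  · intro x
    rw [← integral_const_mul]
    refine setIntegral_congr_fun measurableSet_Ioi fun y hy => ?_
    have hy : (0:ℝ) < y := hy
    unfold pab
    have h1 : Real.Gamma (α + 1) = α * Real.Gamma α := Real.Gamma_add_one (by linarith)
    have h2 : β ^ (α + 1) = β ^ α * β := Real.rpow_add_one hβ.ne' α
    have h3 : y ^ (α + 1 - 1) = y ^ (α - 1) * y := by
      rw [show (α + 1 - 1 : ℝ) = (α - 1) + 1 by ring, Real.rpow_add_one hy.ne']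
    rw [h1, h2, h3]
    field_simp
  · intro x
    have hnn : 0 ≤ᵐ[volume.restrict (Ioi (0:ℝ))] fun y => y * pab α β x y :=
      (ae_restrict_iff' measurableSet_Ioi).2 (Filter.Eventually.of_forall fun y hy =>
        mul_nonneg (le_of_lt hy) (pab_pos α β x hα0 hβ hy).le)
    have hJ : 0 < ∫ y in Ioi (0:ℝ), y * pab α β x y := by
      rw [setIntegral_pos_iff_support_of_nonneg_ae hnn (integrableOn_mul_pab α β x hα hβ)]
      have hsub : Ioi (0:ℝ) ⊆ Function.support (fun y => y * pab α β x y) ∩ Ioi 0 :=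
        fun y hy => ⟨(mul_pos hy (pab_pos α β x hα0 hβ hy)).ne', hy⟩
      calc (0:ENNReal) < volume (Ioi (0:ℝ)) := by simp [Real.volume_Ioi]
        _ ≤ _ := measure_mono hsub
    have hlog := (hasDerivAt_main α β hα hβ x).log hJ.ne'
    rw [hlog.deriv]
    ring
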